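/- Let U ⊆ ℝ^d be open and let χ : U → H be twice continuously (Fréchet) differentiable. Define g(x, y) := (Ψ(χ(y)))(x) = 1 − exp(−∫₀ˣ (ι(χ(y)))(s) ds) for x ≥ 0, y ∈ U. Then: (i) g is jointly continuous on ℝ≥0 × U; (ii) for each fixed y ∈ U, x ↦ g(x, y) is continuously differentiable with ∂_x g(x, y) = (ι(χ(y)))(x) · (1 − g(x, y)), and (x, y) ↦ ∂_x g(x, y) is jointly continuous; (iii) for each fixed x ≥ 0, y ↦ g(x, y) is twice continuously differentiable on U. -/

import Mathlib

set_option maxHeartbeats 4000000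


open scoped NNReal
open Filter Topology MeasureTheory

theorem stmt8
    {H : Type*} [NormedAddCommGroup H] [InnerProductSpace ℝ H]
    [CompleteSpace H] [TopologicalSpace.SeparableSpace H]
    (ι : H →ₗ[ℝ] (ℝ≥0 → ℝ)) (hι : Function.Injective ι)
    (hH1 : Continuous fun f : H => ι f 0)
    (S : ℝ≥0 → H →L[ℝ] H)
    (hshift : ∀ (h : ℝ≥0) (f : H) (x : ℝ≥0), ι (S h f) x = ι f (x + h))
    (hS0 : S 0 = ContinuousLinearMap.id ℝ H)
    (hSadd : ∀ a b : ℝ≥0, S (a + b) = (S a).comp (S b))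
    (hScont : ∀ f : H, Continuous fun h : ℝ≥0 => S h f)
    {d : ℕ} (U : Set (EuclideanSpace ℝ (Fin d))) (hUopen : IsOpen U)
    (χ : EuclideanSpace ℝ (Fin d) → H) (hχ : ContDiffOn ℝ 2 χ U)
    (g : ℝ → EuclideanSpace ℝ (Fin d) → ℝ)
    (hg : ∀ (x : ℝ) (y : EuclideanSpace ℝ (Fin d)),
      g x y = 1 - Real.exp (-∫ s in (0:ℝ)..x, ι (χ y) s.toNNReal)) :
    -- (i) g is jointly continuous on ℝ≥0 × U
    ContinuousOn (fun p : ℝ × EuclideanSpace ℝ (Fin d) => g p.1 p.2)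
      (Set.Ici 0 ×ˢ U) ∧
    -- (ii) x ↦ g(x,y) is C¹ with ∂_x g(x,y) = (ι(χ y))(x)·(1 − g(x,y)),
    --      jointly continuous in (x,y)
    (∀ y ∈ U, ∀ x : ℝ, 0 ≤ x →
      HasDerivWithinAt (fun t : ℝ => g t y)
        (ι (χ y) x.toNNReal * (1 - g x y)) (Set.Ici 0) x) ∧
    ContinuousOn (fun p : ℝ × EuclideanSpace ℝ (Fin d) =>
        ι (χ p.2) p.1.toNNReal * (1 - g p.1 p.2))
      (Set.Ici 0 ×ˢ U) ∧
    -- (iii) y ↦ g(x,y) is twice continuously differentiable on U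
    (∀ x : ℝ, 0 ≤ x → ContDiffOn ℝ 2 (fun y => g x y) U) := by
  -- Step 1: local uniform bound on ‖S h‖ (Banach–Steinhaus)
  have hub : ∀ b : ℝ≥0, ∃ M : ℝ, 0 ≤ M ∧ ∀ h : ℝ≥0, h ≤ b → ‖S h‖ ≤ M := by
    intro b
    have hpt : ∀ f : H, ∃ C, ∀ i : Set.Icc (0 : ℝ≥0) b, ‖S i f‖ ≤ C := by
      intro f
      obtain ⟨C, hC⟩ := (isCompact_Icc (a := (0 : ℝ≥0)) (b := b)).exists_bound_of_continuousOn
        ((hScont f).continuousOn)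
      exact ⟨C, fun i => hC i i.2⟩
    obtain ⟨C, hC⟩ := banach_steinhaus hpt
    exact ⟨max C 0, le_max_right _ _,
      fun h hh => le_max_of_le_left (hC ⟨h, ⟨zero_le, hh⟩⟩)⟩
  -- Step 2: joint continuity of (h, f) ↦ S h f
  have hjoint : Continuous fun p : ℝ≥0 × H => S p.1 p.2 := by
    rw [continuous_iff_continuousAt]
    rintro ⟨h₀, f₀⟩
    obtain ⟨M, hM0, hM⟩ := hub (h₀ + 1)
    rw [ContinuousAt, tendsto_iff_norm_sub_tendsto_zero]
    have hev : ∀ᶠ p : ℝ≥0 × H in 𝓝 (h₀, f₀), p.1 ≤ h₀ + 1 := by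
      have h1 : Tendsto (fun p : ℝ≥0 × H => p.1) (𝓝 (h₀, f₀)) (𝓝 h₀) :=
        continuous_fst.tendsto _
      filter_upwards [h1.eventually_lt_const (lt_add_of_pos_right h₀ one_pos)] with p hp
      exact hp.le
    apply squeeze_zero' (Eventually.of_forall fun p => norm_nonneg _)
      (g := fun p : ℝ≥0 × H => M * ‖p.2 - f₀‖ + ‖S p.1 f₀ - S h₀ f₀‖)
    · filter_upwards [hev] with p hp
      calc ‖S p.1 p.2 - S h₀ f₀‖
          = ‖S p.1 (p.2 - f₀) + (S p.1 f₀ - S h₀ f₀)‖ := by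
            congr 1
            rw [map_sub]
            abel
      _ ≤ ‖S p.1 (p.2 - f₀)‖ + ‖S p.1 f₀ - S h₀ f₀‖ := norm_add_le _ _
      _ ≤ M * ‖p.2 - f₀‖ + ‖S p.1 f₀ - S h₀ f₀‖ := by
            gcongr
            exact ((S p.1).le_opNorm _).trans (by gcongr; exact hM _ hp)
    · have t1 : Tendsto (fun p : ℝ≥0 × H => M * ‖p.2 - f₀‖) (𝓝 (h₀, f₀)) (𝓝 0) := by
        have := tendsto_const_nhds (x := M) (f := 𝓝 (h₀, f₀)) |>.mul
          (((continuous_snd.tendsto ((h₀, f₀) : ℝ≥0 × H)).sub_const f₀).norm)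
        simpa using this
      have t2 : Tendsto (fun p : ℝ≥0 × H => ‖S p.1 f₀ - S h₀ f₀‖) (𝓝 (h₀, f₀)) (𝓝 0) := by
        have : Tendsto (fun p : ℝ≥0 × H => S p.1 f₀) (𝓝 (h₀, f₀)) (𝓝 (S h₀ f₀)) :=
          ((hScont f₀).tendsto h₀).comp (continuous_fst.tendsto _)
        simpa using (this.sub_const (S h₀ f₀)).norm
      simpa using t1.add t2
  -- Step 3: joint continuity of (h, f) ↦ ι f h
  have hF : Continuous fun p : ℝ≥0 × H => ι p.2 p.1 := by
    refine (hH1.comp hjoint).congr fun p => ?_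
    show ι (S p.1 p.2) 0 = ι p.2 p.1
    rw [hshift]; simp
  have hc : Continuous fun p : ℝ × H => ι p.2 p.1.toNNReal :=
    hF.comp ((continuous_real_toNNReal.comp continuous_fst).prodMk continuous_snd)
  -- pointwise continuity in s for fixed f
  have hcy : ∀ f : H, Continuous fun s : ℝ => ι f s.toNNReal := fun f =>
    hc.comp (continuous_id.prodMk continuous_const)
  -- Step 4: continuity of the parametric integral
  have hI : Continuous fun p : ℝ × H => ∫ s in (0:ℝ)..p.1, ι p.2 s.toNNReal := by
    apply intervalIntegral.continuous_parametric_intervalIntegral_of_continuous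
      (f := fun (p : ℝ × H) (s : ℝ) => ι p.2 s.toNNReal) (μ := volume)
      (s := fun p : ℝ × H => p.1) ?_ continuous_fst
    exact hc.comp (continuous_snd.prodMk (continuous_snd.comp continuous_fst))
  have hχc : ContinuousOn χ U := hχ.continuousOn
  -- ContinuousOn of the integral composed with χ
  have hIc : ContinuousOn (fun p : ℝ × EuclideanSpace ℝ (Fin d) =>
      ∫ s in (0:ℝ)..p.1, ι (χ p.2) s.toNNReal) (Set.Ici 0 ×ˢ U) := by
    have hmap : ContinuousOn (fun p : ℝ × EuclideanSpace ℝ (Fin d) => ((p.1, χ p.2) : ℝ × H))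
        (Set.Ici 0 ×ˢ U) :=
      continuousOn_fst.prodMk (hχc.comp continuousOn_snd fun p hp => hp.2)
    have h2 := hI.comp_continuousOn hmap
    exact h2
  have hgc : ContinuousOn (fun p : ℝ × EuclideanSpace ℝ (Fin d) => g p.1 p.2)
      (Set.Ici 0 ×ˢ U) := by
    refine ContinuousOn.congr (f := fun p : ℝ × EuclideanSpace ℝ (Fin d) =>
      1 - Real.exp (-∫ s in (0:ℝ)..p.1, ι (χ p.2) s.toNNReal)) ?_ ?_
    · exact continuousOn_const.sub (Real.continuous_exp.comp_continuousOn hIc.neg)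
    · intro p hp; exact hg p.1 p.2
  refine ⟨hgc, ?_, ?_, ?_⟩
  · -- (ii) derivative in x
    intro y hy x hx
    have hG : HasDerivAt (fun t : ℝ => ∫ s in (0:ℝ)..t, ι (χ y) s.toNNReal)
        (ι (χ y) x.toNNReal) x :=
      ((hcy (χ y)).integral_hasStrictDerivAt 0 x).hasDerivAt
    have h2 : HasDerivAt (fun t : ℝ => 1 - Real.exp
        (-∫ s in (0:ℝ)..t, ι (χ y) s.toNNReal))
        (ι (χ y) x.toNNReal *
          Real.exp (-∫ s in (0:ℝ)..x, ι (χ y) s.toNNReal)) x := by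
      have hexp := (Real.hasDerivAt_exp
        (-∫ s in (0:ℝ)..x, ι (χ y) s.toNNReal)).comp x hG.neg
      have := (hasDerivAt_const x (1 : ℝ)).sub hexp
      refine this.congr_deriv ?_
      ring
    have : HasDerivAt (fun t : ℝ => g t y)
        (ι (χ y) x.toNNReal * Real.exp (-∫ s in (0:ℝ)..x, ι (χ y) s.toNNReal)) x := by
      refine h2.congr_of_eventuallyEq ?_
      filter_upwards with t
      rw [hg]
    have heq : Real.exp (-∫ s in (0:ℝ)..x, ι (χ y) s.toNNReal) = 1 - g x y := by
      rw [hg]; ring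
    rw [heq] at this
    exact this.hasDerivWithinAt
  · -- (ii) joint continuity of the derivative
    have h1 : ContinuousOn (fun p : ℝ × EuclideanSpace ℝ (Fin d) =>
        ι (χ p.2) p.1.toNNReal) (Set.Ici 0 ×ˢ U) := by
      have hmap : ContinuousOn (fun p : ℝ × EuclideanSpace ℝ (Fin d) => ((p.1, χ p.2) : ℝ × H))
          (Set.Ici 0 ×ˢ U) :=
        continuousOn_fst.prodMk (hχc.comp continuousOn_snd fun p hp => hp.2)
      have h2 := hc.comp_continuousOn hmap
      exact h2
    exact h1.mul (continuousOn_const.sub hgc)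
  · -- (iii) smoothness in y
    intro x hx
    -- integrability
    have hint : ∀ f : H, IntervalIntegrable (fun s : ℝ => ι f s.toNNReal) volume 0 x :=
      fun f => (hcy f).intervalIntegrable 0 x
    -- bound
    set E0 : H →L[ℝ] ℝ :=
      { toLinearMap :=
          { toFun := fun f => ι f 0
            map_add' := fun a b => by
              show ι (a + b) 0 = ι a 0 + ι b 0
              rw [map_add]; rfl
            map_smul' := fun c a => by
              show ι (c • a) 0 = c • ι a 0
              rw [_root_.map_smul]; rfl }
        cont := hH1 } with hE0
    obtain ⟨M, hM0, hM⟩ := hub x.toNNReal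
    have hbd : ∀ f : H, ∀ s : ℝ, s ∈ Set.uIoc (0:ℝ) x →
        ‖ι f s.toNNReal‖ ≤ ‖E0‖ * M * ‖f‖ := by
      intro f s hs
      have hs' : s.toNNReal ≤ x.toNNReal := by
        rw [Set.uIoc_of_le hx] at hs
        exact Real.toNNReal_le_toNNReal hs.2
      have e1 : ι f s.toNNReal = E0 (S s.toNNReal f) := by
        show ι f s.toNNReal = ι (S s.toNNReal f) 0
        rw [hshift]; simp
      rw [e1]
      calc ‖E0 (S s.toNNReal f)‖ ≤ ‖E0‖ * ‖S s.toNNReal f‖ := E0.le_opNorm _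
      _ ≤ ‖E0‖ * (M * ‖f‖) := by
          gcongr
          exact ((S s.toNNReal).le_opNorm f).trans (by gcongr; exact hM _ hs')
      _ = ‖E0‖ * M * ‖f‖ := by ring
    -- the continuous linear map f ↦ ∫₀ˣ ι f
    set L : H →ₗ[ℝ] ℝ :=
      { toFun := fun f => ∫ s in (0:ℝ)..x, ι f s.toNNReal
        map_add' := fun a b => by
          show (∫ s in (0:ℝ)..x, ι (a + b) s.toNNReal)
              = (∫ s in (0:ℝ)..x, ι a s.toNNReal) + ∫ s in (0:ℝ)..x, ι b s.toNNReal
          have : (fun s : ℝ => ι (a + b) s.toNNReal)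
              = fun s : ℝ => ι a s.toNNReal + ι b s.toNNReal := by
            funext s; rw [map_add]; rfl
          rw [this, intervalIntegral.integral_add (hint a) (hint b)]
        map_smul' := fun c a => by
          show (∫ s in (0:ℝ)..x, ι (c • a) s.toNNReal)
              = c • ∫ s in (0:ℝ)..x, ι a s.toNNReal
          have : (fun s : ℝ => ι (c • a) s.toNNReal)
              = fun s : ℝ => c * ι a s.toNNReal := by
            funext s; rw [_root_.map_smul]; rfl
          rw [this, intervalIntegral.integral_const_mul, smul_eq_mul] } with hL
    have hLb : ∀ f : H, ‖L f‖ ≤ (‖E0‖ * M * |x|) * ‖f‖ := by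
      intro f
      have := intervalIntegral.norm_integral_le_of_norm_le_const
        (C := ‖E0‖ * M * ‖f‖) (f := fun s : ℝ => ι f s.toNNReal) (a := 0) (b := x)
        (fun s hs => hbd f s hs)
      simpa [hL, mul_comm, mul_left_comm, mul_assoc] using this
    set Lc : H →L[ℝ] ℝ := LinearMap.mkContinuous L (‖E0‖ * M * |x|) hLb with hLc
    have haux : ContDiff ℝ 2 fun f : H => 1 - Real.exp (-(Lc f)) :=
      contDiff_const.sub (Real.contDiff_exp.comp Lc.contDiff.neg)
    refine (haux.comp_contDiffOn hχ).congr ?_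
    intro y hy
    rw [hg]
    rfl
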